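/- Suppose that for some index j ∈ {1,…,n} the evolution U_j factors through a one-dimensional 'bottleneck': U_j = W ∘ P_b ∘ V, where P_b is the rank-one operator P_b x = ⟨ψ_b, x⟩ ψ_b for some unit vector ψ_b ∈ H and W, V are linear operators on H. Assume D := ⟨ψ_f, M(∅) ψ_i⟩ ≠ 0. Then the measurements before and after the bottleneck are weakly independent: for every T_1 ⊆ {1,…,j−1} and every T_2 ⊆ {j,…,n}, w(T_1 ∪ T_2) = w(T_1)·w(T_2). -/

import Mathlib

/-- The operator `M(S) = U_{n+1} B_n U_n ⋯ B_1 U_1` of a sequential weak measurement,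
where `B_k = A_k` if `k ∈ S` and `B_k = 1` otherwise (here indices are `0`-based:
the evolution `U k.castSucc` is applied just before the observable `A k`, and
`U (Fin.last n)` is the final evolution). -/
noncomputable def seqOp {H : Type*} [AddCommGroup H] [Module ℂ H] (n : ℕ)
    (A : Fin n → Module.End ℂ H) (U : Fin (n + 1) → Module.End ℂ H)
    (S : Finset (Fin n)) : Module.End ℂ H :=
  U (Fin.last n) *
    ((List.ofFn fun k : Fin n => (if k ∈ S then A k else 1) * U k.castSucc).reverse).prod

/-- The sequential weak value `w(S) = ⟨ψ_f, M(S) ψ_i⟩ / ⟨ψ_f, M(∅) ψ_i⟩`. -/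
noncomputable def weakValue {H : Type*} [NormedAddCommGroup H] [InnerProductSpace ℂ H]
    (n : ℕ) (A : Fin n → Module.End ℂ H) (U : Fin (n + 1) → Module.End ℂ H)
    (ψi ψf : H) (S : Finset (Fin n)) : ℂ :=
  (inner ℂ ψf (seqOp n A U S ψi) : ℂ) / (inner ℂ ψf (seqOp n A U ∅ ψi) : ℂ)

/-- Suppose the evolution immediately preceding the `j`-th observable
factors through a one-dimensional "bottleneck": `U_j = W ∘ P_b ∘ V` where
`P_b x = ⟨ψ_b, x⟩ ψ_b` for a unit vector `ψ_b`.  If `D = ⟨ψ_f, M(∅) ψ_i⟩ ≠ 0`, then the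
measurements before the bottleneck (indices `k < j`) and after it (indices `k ≥ j`) are
weakly independent: `w(T₁ ∪ T₂) = w(T₁)·w(T₂)` whenever `T₁ ⊆ {k | k < j}` and
`T₂ ⊆ {k | j ≤ k}`. -/
theorem weaklyIndependent_of_bottleneck
    {H : Type*} [NormedAddCommGroup H] [InnerProductSpace ℂ H] [FiniteDimensional ℂ H]
    {n : ℕ} (ψi ψf ψb : H) (hψb : ‖ψb‖ = 1)
    (A : Fin n → Module.End ℂ H) (U : Fin (n + 1) → Module.End ℂ H)
    (j : Fin n) (W V : Module.End ℂ H)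
    (hbottleneck : ∀ x : H, U j.castSucc x = W ((inner ℂ ψb (V x) : ℂ) • ψb))
    (hD : (inner ℂ ψf (seqOp n A U ∅ ψi) : ℂ) ≠ 0)
    (T₁ T₂ : Finset (Fin n)) (hT₁ : ∀ k ∈ T₁, k < j) (hT₂ : ∀ k ∈ T₂, j ≤ k) :
    weakValue n A U ψi ψf (T₁ ∪ T₂) =
      weakValue n A U ψi ψf T₁ * weakValue n A U ψi ψf T₂ := by
  classical
  set ℓ : Finset (Fin n) → List (Module.End ℂ H) :=
    fun S => List.ofFn fun k : Fin n => (if k ∈ S then A k else 1) * U k.castSucc with hℓ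
  have hlen : ∀ S, (ℓ S).length = n := fun S => by simp [hℓ]
  have hjn : (j : ℕ) < n := j.isLt
  have hsplit : ∀ S : Finset (Fin n), seqOp n A U S =
      U (Fin.last n) * (((ℓ S).drop ((j:ℕ) + 1)).reverse.prod *
        (((if j ∈ S then A j else 1) * U j.castSucc) * ((ℓ S).take (j:ℕ)).reverse.prod)) := by
    intro S
    have hL : seqOp n A U S = U (Fin.last n) * (ℓ S).reverse.prod := by
      rw [seqOp, hℓ]
    have hjlen : (j : ℕ) < (ℓ S).length := by rw [hlen]; exact hjn
    have h2 : (ℓ S).drop (j:ℕ) = (ℓ S)[(j:ℕ)] :: (ℓ S).drop ((j:ℕ)+1) :=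
      List.drop_eq_getElem_cons hjlen
    have h3 : (ℓ S)[(j:ℕ)] = (if j ∈ S then A j else 1) * U j.castSucc := by
      simp [hℓ]
    rw [hL]
    conv_lhs => rw [← List.take_append_drop (j:ℕ) (ℓ S)]
    rw [List.reverse_append, List.prod_append, h2, List.reverse_cons, List.prod_append,
      List.prod_singleton, h3, mul_assoc, mul_assoc]
  have htake : ∀ S S' : Finset (Fin n), (∀ k : Fin n, (k:ℕ) < (j:ℕ) → (k ∈ S ↔ k ∈ S')) →
      (ℓ S).take (j:ℕ) = (ℓ S').take (j:ℕ) := by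
    intro S S' h
    apply List.ext_getElem
    · simp [hlen]
    · intro i h1 h2
      have hi : i < (j:ℕ) := by
        simpa [hlen, Nat.lt_min] using h1
      have hin : i < n := lt_trans hi hjn
      simp only [List.getElem_take, hℓ, List.getElem_ofFn]
      have := h ⟨i, hin⟩ hi
      simp [this]
  have hdrop : ∀ S S' : Finset (Fin n), (∀ k : Fin n, (j:ℕ) < (k:ℕ) → (k ∈ S ↔ k ∈ S')) →
      (ℓ S).drop ((j:ℕ)+1) = (ℓ S').drop ((j:ℕ)+1) := by
    intro S S' h
    apply List.ext_getElem
    · simp [hlen]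
    · intro i h1 h2
      have hin : (j:ℕ) + 1 + i < n := by
        have := h1
        simp [hlen] at this
        omega
      simp only [List.getElem_drop, hℓ, List.getElem_ofFn]
      have := h ⟨(j:ℕ)+1+i, hin⟩ (by simp; omega)
      simp [this]
  -- numerator factorization
  have hnum : ∀ S : Finset (Fin n), (inner ℂ ψf (seqOp n A U S ψi) : ℂ) =
      (inner ℂ ψb (V (((ℓ S).take (j:ℕ)).reverse.prod ψi)) : ℂ) *
      (inner ℂ ψf (U (Fin.last n) (((ℓ S).drop ((j:ℕ)+1)).reverse.prod
        ((if j ∈ S then A j else 1) (W ψb)))) : ℂ) := by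
    intro S
    rw [hsplit S]
    simp only [Module.End.mul_apply, hbottleneck, map_smul, inner_smul_right]
  have ha1 : (ℓ (T₁ ∪ T₂)).take (j:ℕ) = (ℓ T₁).take (j:ℕ) := by
    apply htake; intro k hk
    simp only [Finset.mem_union]
    constructor
    · rintro (h | h)
      · exact h
      · exact absurd (hT₂ k h) (by simpa using (show (k:ℕ) < (j:ℕ) from hk))
    · exact Or.inl
  have ha2 : (ℓ T₂).take (j:ℕ) = (ℓ (∅ : Finset (Fin n))).take (j:ℕ) := by
    apply htake; intro k hk
    simp only [Finset.notMem_empty, iff_false]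
    intro h
    exact absurd (hT₂ k h) (by simpa using hk)
  have hb1 : (ℓ (T₁ ∪ T₂)).drop ((j:ℕ)+1) = (ℓ T₂).drop ((j:ℕ)+1) := by
    apply hdrop; intro k hk
    simp only [Finset.mem_union]
    constructor
    · rintro (h | h)
      · exact absurd (Fin.lt_def.mp (hT₁ k h)) (by omega)
      · exact h
    · exact Or.inr
  have hb2 : (ℓ T₁).drop ((j:ℕ)+1) = (ℓ (∅ : Finset (Fin n))).drop ((j:ℕ)+1) := by
    apply hdrop; intro k hk
    simp only [Finset.notMem_empty, iff_false]
    intro h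
    have := Fin.lt_def.mp (hT₁ k h)
    omega
  have hjT₁ : j ∉ T₁ := fun h => absurd (hT₁ j h) (lt_irrefl j)
  have hjU : (j ∈ T₁ ∪ T₂) ↔ (j ∈ T₂) := by simp [hjT₁]
  set b : Finset (Fin n) → ℂ := fun S =>
    (inner ℂ ψb (V (((ℓ S).take (j:ℕ)).reverse.prod ψi)) : ℂ) with hb
  set a : Finset (Fin n) → ℂ := fun S =>
    (inner ℂ ψf (U (Fin.last n) (((ℓ S).drop ((j:ℕ)+1)).reverse.prod
      ((if j ∈ S then A j else 1) (W ψb)))) : ℂ) with ha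
  have keyU : (inner ℂ ψf (seqOp n A U (T₁ ∪ T₂) ψi) : ℂ) = b T₁ * a T₂ := by
    rw [hnum, hb, ha]
    simp only [ha1, hb1, if_congr hjU rfl rfl]
  have key1 : (inner ℂ ψf (seqOp n A U T₁ ψi) : ℂ) = b T₁ * a ∅ := by
    rw [hnum, hb, ha]
    simp only [hb2, hjT₁, if_false, Finset.notMem_empty]
  have key2 : (inner ℂ ψf (seqOp n A U T₂ ψi) : ℂ) = b ∅ * a T₂ := by
    rw [hnum, hb, ha]
    simp only [ha2]
  have key0 : (inner ℂ ψf (seqOp n A U (∅ : Finset (Fin n)) ψi) : ℂ) = b ∅ * a ∅ := by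
    rw [hnum, hb, ha]
  rw [key0] at hD
  have hb0 : b ∅ ≠ 0 := fun h => hD (by rw [h, zero_mul])
  have ha0 : a ∅ ≠ 0 := fun h => hD (by rw [h, mul_zero])
  rw [weakValue, weakValue, weakValue, keyU, key1, key2, key0]
  field_simp
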